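/- Let k be a field, q > 1 an integer, t ≥ 1 and c ≥ 1. Let S_n act on (k^×)^n by (σ·x)_j = x_{σ⁻¹(j)}, and for μ ∈ ℤ^n and η ∈ k^× set μ(η) = (η^{μ₁},…,η^{μ_n}). Let w ∈ S_n satisfy w^t = 1 and set φ(x)_j = (x_{w(j)})^q. Suppose ζ′ ∈ k^× has order q^{ct} − 1 and put ζ = (ζ′)^{(q^{ct}−1)/(q^t−1)} (so ζ has order q^t − 1 and is the norm of ζ′ from 𝔽_{q^{ct}} to 𝔽_{q^t}). Then ∏_{i=0}^{ct−1} φ^i(μ(ζ′)) = ∏_{i=0}^{t−1} φ^i(μ(ζ)) in (k^×)^n. -/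

import Mathlib

/-- Jantzen's element `s = s_{w,μ} = ∏_{i=0}^{t-1} φ^i(μ(ζ)) ∈ (k^×)^n`, where
`φ(x)_j = (x_{w(j)})^q` and `μ(ζ) = (ζ^{μ₁},…,ζ^{μ_n})`. -/
def jS {n : ℕ} {k : Type*} [Field k] (q t : ℕ) (w : Equiv.Perm (Fin n)) (ζ : kˣ)
    (μ : Fin n → ℤ) : Fin n → kˣ :=
  ∏ i ∈ Finset.range t,
    (fun x : Fin n → kˣ => fun j => (x (w j)) ^ q)^[i] (fun j => ζ ^ (μ j))

section aux

variable {n : ℕ} {k : Type*} [Field k]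

lemma iter_phi (q : ℕ) (w : Equiv.Perm (Fin n)) (i : ℕ) (x : Fin n → kˣ) (j : Fin n) :
    (fun x : Fin n → kˣ => fun j => (x (w j)) ^ q)^[i] x j = (x ((w ^ i) j)) ^ (q ^ i) := by
  induction i generalizing j with
  | zero => simp
  | succ i ih =>
      rw [Function.iterate_succ_apply']
      show ((fun x : Fin n → kˣ => fun j => (x (w j)) ^ q)^[i] x (w j)) ^ q = _
      rw [ih]
      rw [← pow_mul, ← pow_succ, ← Equiv.Perm.mul_apply, ← pow_succ]

lemma jS_apply (q T : ℕ) (w : Equiv.Perm (Fin n)) (ζ : kˣ) (μ : Fin n → ℤ) (j : Fin n) :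
    jS q T w ζ μ j = ∏ i ∈ Finset.range T, (ζ ^ (μ ((w ^ i) j))) ^ q ^ i := by
  unfold jS
  rw [Finset.prod_apply]
  exact Finset.prod_congr rfl fun i _ => iter_phi q w i _ j

lemma jS_pow (q T N : ℕ) (w : Equiv.Perm (Fin n)) (ζ : kˣ) (μ : Fin n → ℤ) (j : Fin n) :
    jS q T w (ζ ^ N) μ j = (jS q T w ζ μ j) ^ N := by
  rw [jS_apply, jS_apply, ← Finset.prod_pow]
  refine Finset.prod_congr rfl fun i _ => ?_
  have h : (ζ ^ N) ^ (μ ((w ^ i) j)) = (ζ ^ (μ ((w ^ i) j))) ^ N := by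
    rw [← zpow_natCast ζ N, ← zpow_mul, mul_comm, zpow_mul, zpow_natCast]
  rw [h, ← pow_mul, mul_comm, pow_mul]

lemma jS_block (q t : ℕ) (w : Equiv.Perm (Fin n)) (hw : w ^ t = 1) (ζ : kˣ)
    (μ : Fin n → ℤ) (c : ℕ) (j : Fin n) :
    jS q (c * t) w ζ μ j = (jS q t w ζ μ j) ^ (∑ s ∈ Finset.range c, (q ^ t) ^ s) := by
  induction c with
  | zero => simp [jS_apply]
  | succ c ih =>
      have h1 : (c + 1) * t = c * t + t := by ring
      rw [h1, jS_apply, Finset.prod_range_add, ← jS_apply]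
      have hwct : w ^ (c * t) = 1 := by rw [mul_comm, pow_mul, hw, one_pow]
      have hterm : ∀ a, (ζ ^ μ ((w ^ (c * t + a)) j)) ^ q ^ (c * t + a)
          = ((ζ ^ μ ((w ^ a) j)) ^ q ^ a) ^ q ^ (c * t) := by
        intro a
        rw [pow_add, hwct, one_mul, pow_add, mul_comm (q ^ (c * t)), pow_mul]
      simp_rw [hterm]
      rw [Finset.prod_pow, ← jS_apply, ih, Finset.sum_range_succ, pow_add]
      congr 1
      rw [← pow_mul, mul_comm t c]

lemma geom_div (q t c : ℕ) (hq : 1 < q) (ht : 1 ≤ t) :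
    (q ^ (c * t) - 1) / (q ^ t - 1) = ∑ s ∈ Finset.range c, (q ^ t) ^ s := by
  have hq1 : 1 ≤ q ^ t := Nat.one_le_pow _ _ (by omega)
  have hq2 : 2 ≤ q ^ t := by
    calc 2 ≤ q ^ 1 := by rw [pow_one]; omega
    _ ≤ q ^ t := Nat.pow_le_pow_right (by omega) ht
  have hqct : 1 ≤ q ^ (c * t) := Nat.one_le_pow _ _ (by omega)
  have key : q ^ (c * t) - 1 = (∑ s ∈ Finset.range c, (q ^ t) ^ s) * (q ^ t - 1) := by
    have hgs := geom_sum_mul ((q : ℤ) ^ t) c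
    have hcast : ((q : ℤ) ^ t) ^ c = (q : ℤ) ^ (c * t) := by rw [← pow_mul, mul_comm]
    rw [hcast] at hgs
    zify [hq1, hqct]
    push_cast
    linarith [hgs]
  rw [key, Nat.mul_div_cancel _ (by omega)]

end aux

theorem stmt11 {k : Type*} [Field k] (n q t c : ℕ) (hq : 1 < q) (ht : 1 ≤ t) (hc : 1 ≤ c)
    (ζ' : kˣ) (hζ' : orderOf ζ' = q ^ (c * t) - 1)
    (w : Equiv.Perm (Fin n)) (hw : w ^ t = 1) (μ : Fin n → ℤ) :
    jS q (c * t) w ζ' μ = jS q t w (ζ' ^ ((q ^ (c * t) - 1) / (q ^ t - 1))) μ := by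
  funext j
  rw [jS_pow, geom_div q t c hq ht, jS_block q t w hw ζ' μ c j]
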